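/- Let (M_n) be a sequence of non-negative integer d×d matrices and suppose there exist a matrix B with all entries positive and indices j_1 < k_1 ≤ j_2 < k_2 ≤ ⋯ such that B = M_{j_1}⋯M_{k_1−1} = M_{j_2}⋯M_{k_2−1} = ⋯. Then the nested intersection ∩_{n∈ℕ} M_0 M_1 ⋯ M_{n−1} ℝ_+^d is a single half-line ℝ_+ f for some vector f with all entries positive. -/

import Mathlib

open Finset Filter

section fbhelp
variable {d : ℕ}

lemma fb_mulVec_apply (A : Matrix (Fin d) (Fin d) ℝ) (x : Fin d → ℝ) (i : Fin d) :
    A.mulVec x i = ∑ l, A i l * x l := by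
  simp [Matrix.mulVec, dotProduct]

lemma fb_mulVec_nonneg {A : Matrix (Fin d) (Fin d) ℝ} {x : Fin d → ℝ}
    (hA : ∀ i l, 0 ≤ A i l) (hx : ∀ l, 0 ≤ x l) (i : Fin d) : 0 ≤ A.mulVec x i := by
  rw [fb_mulVec_apply]
  exact Finset.sum_nonneg fun l _ => mul_nonneg (hA i l) (hx l)

lemma fb_mulVec_pos_row {A : Matrix (Fin d) (Fin d) ℝ} {x : Fin d → ℝ}
    (hA : ∀ i l, 0 ≤ A i l) (hrow : ∀ i, ∃ l, 0 < A i l) (hx : ∀ l, 0 < x l) (i : Fin d) :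
    0 < A.mulVec x i := by
  rw [fb_mulVec_apply]
  obtain ⟨l, hl⟩ := hrow i
  exact Finset.sum_pos' (fun l _ => mul_nonneg (hA i l) (hx l).le)
    ⟨l, Finset.mem_univ l, mul_pos hl (hx l)⟩

lemma fb_mulVec_pos_mat {A : Matrix (Fin d) (Fin d) ℝ} {x : Fin d → ℝ}
    (hA : ∀ i l, 0 < A i l) (hx : ∀ l, 0 ≤ x l) (hx0 : x ≠ 0) (i : Fin d) :
    0 < A.mulVec x i := by
  rw [fb_mulVec_apply]
  obtain ⟨l, hl⟩ : ∃ l, x l ≠ 0 := by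
    by_contra h; push_neg at h; exact hx0 (funext h)
  exact Finset.sum_pos' (fun l _ => mul_nonneg (hA i l).le (hx l))
    ⟨l, Finset.mem_univ l, mul_pos (hA i l) ((hx l).lt_of_ne (Ne.symm hl))⟩

lemma fb_expand (A : Matrix (Fin d) (Fin d) ℝ) (a b : Fin d → ℝ) (p q : Fin d) :
    A.mulVec a p * A.mulVec b q = ∑ l, ∑ l', A p l * A q l' * (a l * b l') := by
  rw [fb_mulVec_apply, fb_mulVec_apply, Finset.sum_mul_sum]
  exact Finset.sum_congr rfl fun l _ => Finset.sum_congr rfl fun l' _ => by ring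

/-- bilinearity lemma: cross-ratio bounds are preserved by nonnegative matrices. -/
lemma fb_cross_mulVec {Q : Matrix (Fin d) (Fin d) ℝ} (hQ : ∀ i l, 0 ≤ Q i l)
    {u v : Fin d → ℝ} {c : ℝ}
    (h : ∀ l l', u l * v l' ≤ c * (u l' * v l)) (i i' : Fin d) :
    Q.mulVec u i * Q.mulVec v i' ≤ c * (Q.mulVec u i' * Q.mulVec v i) := by
  have key : ∑ l, ∑ l', Q i l * Q i' l' * (u l * v l')
      ≤ ∑ l, ∑ l', Q i l * Q i' l' * (c * (u l' * v l)) :=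
    Finset.sum_le_sum fun l _ => Finset.sum_le_sum fun l' _ =>
      mul_le_mul_of_nonneg_left (h l l') (mul_nonneg (hQ i l) (hQ i' l'))
  rw [fb_expand Q u v i i']
  refine key.trans (le_of_eq ?_)
  rw [fb_expand Q u v i' i, Finset.mul_sum]
  rw [Finset.sum_comm]
  refine Finset.sum_congr rfl fun l' _ => ?_
  rw [Finset.mul_sum]
  exact Finset.sum_congr rfl fun l _ => by ring

end fbhelp
section fbcontract
variable {d : ℕ}

/-- base estimate: images of a positive matrix have cross-ratio at most `N^2`. -/
lemma fb_base {Br : Matrix (Fin d) (Fin d) ℝ} {N : ℝ}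
    (hB1 : ∀ i j, (1:ℝ) ≤ Br i j) (hBN : ∀ i j, Br i j ≤ N)
    {x y : Fin d → ℝ} (hx : ∀ l, 0 ≤ x l) (hy : ∀ l, 0 ≤ y l) (i i' : Fin d) :
    Br.mulVec x i * Br.mulVec y i' ≤ N ^ 2 * (Br.mulVec x i' * Br.mulVec y i) := by
  have key : ∀ (z : Fin d → ℝ), (∀ l, 0 ≤ z l) → ∀ a b : Fin d,
      Br.mulVec z a ≤ N * Br.mulVec z b := by
    intro z hz a b
    rw [fb_mulVec_apply, fb_mulVec_apply, Finset.mul_sum]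
    refine Finset.sum_le_sum fun l _ => ?_
    have h5 : Br a l ≤ N * Br b l := by nlinarith [hB1 a l, hB1 b l, hBN a l, hBN b l]
    nlinarith [mul_le_mul_of_nonneg_right h5 (hz l)]
  have h1 := key x hx i i'
  have h2 := key y hy i' i
  have n1 : 0 ≤ Br.mulVec x i :=
    fb_mulVec_nonneg (fun a b => le_trans zero_le_one (hB1 a b)) hx i
  have n2 : 0 ≤ Br.mulVec y i' :=
    fb_mulVec_nonneg (fun a b => le_trans zero_le_one (hB1 a b)) hy i'
  nlinarith [mul_le_mul h1 h2 n2 (le_trans n1 h1)]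

/-- the key contraction inequality for a positive matrix with entries in `[1, N]`. -/
lemma fb_contract {Br : Matrix (Fin d) (Fin d) ℝ} {N : ℝ} (hd : 0 < d)
    (hB1 : ∀ i j, (1:ℝ) ≤ Br i j) (hBN : ∀ i j, Br i j ≤ N)
    {u v : Fin d → ℝ} (hu : ∀ l, 0 < u l) (hv : ∀ l, 0 < v l) {c : ℝ} (hc1 : 1 ≤ c)
    (h : ∀ l l', u l * v l' ≤ c * (u l' * v l)) (i i' : Fin d) :
    Br.mulVec u i * Br.mulVec v i' ≤
      (1 + (1 - (N ^ 2)⁻¹) * (c - 1)) * (Br.mulVec u i' * Br.mulVec v i) := by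
  have hne : (Finset.univ : Finset (Fin d)).Nonempty := ⟨⟨0, hd⟩, Finset.mem_univ _⟩
  have hN1 : (1:ℝ) ≤ N := le_trans (hB1 ⟨0, hd⟩ ⟨0, hd⟩) (hBN ⟨0, hd⟩ ⟨0, hd⟩)
  have hN2 : (0:ℝ) < N ^ 2 := by nlinarith
  obtain ⟨lM, -, hlM⟩ := Finset.exists_max_image Finset.univ (fun l => u l / v l) hne
  obtain ⟨lm, -, hlm⟩ := Finset.exists_min_image Finset.univ (fun l => u l / v l) hne
  set Mx := u lM / v lM with hMx
  set mx := u lm / v lm with hmx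
  have hmpos : 0 < mx := div_pos (hu lm) (hv lm)
  have h_le_M : ∀ l, u l ≤ Mx * v l := fun l =>
    (div_le_iff₀ (hv l)).1 (hlM l (Finset.mem_univ l))
  have h_m_le : ∀ l, mx * v l ≤ u l := fun l =>
    (le_div_iff₀ (hv l)).1 (hlm l (Finset.mem_univ l))
  have hMcm : Mx ≤ c * mx := by
    have h0 := h lM lm
    have e1 : Mx * v lM = u lM := by
      rw [hMx]; exact div_mul_cancel₀ (u lM) (hv lM).ne'
    have e2 : mx * v lm = u lm := by
      rw [hmx]; exact div_mul_cancel₀ (u lm) (hv lm).ne'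
    have hP : 0 < v lM * v lm := mul_pos (hv lM) (hv lm)
    have h0' : Mx * (v lM * v lm) ≤ (c * mx) * (v lM * v lm) := by
      calc Mx * (v lM * v lm) = (Mx * v lM) * v lm := by ring
        _ = u lM * v lm := by rw [e1]
        _ ≤ c * (u lm * v lM) := h0
        _ = (c * mx) * (v lM * v lm) := by rw [← e2]; ring
    exact le_of_mul_le_mul_right h0' hP
  -- termwise inequality
  have key : ∀ l l', Br i l * Br i' l' * (u l * v l') ≤
      (N ^ 2)⁻¹ * (Br i' l * Br i l' * (u l * v l'))
        + (Br i l * Br i' l' * (Mx * (v l * v l'))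
            - (N ^ 2)⁻¹ * (Br i' l * Br i l' * (Mx * (v l * v l')))) := by
    intro l l'
    have hco : (N ^ 2)⁻¹ * (Br i' l * Br i l') ≤ Br i l * Br i' l' := by
      rw [inv_mul_le_iff₀ hN2]
      have a1 : Br i' l * Br i l' ≤ N * N :=
        mul_le_mul (hBN i' l) (hBN i l') (le_trans zero_le_one (hB1 i l'))
          (le_trans zero_le_one hN1)
      have a2 : (1:ℝ) ≤ Br i l * Br i' l' := by nlinarith [hB1 i l, hB1 i' l']
      nlinarith
    have huv : u l * v l' ≤ Mx * (v l * v l') := by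
      have := h_le_M l
      nlinarith [(hv l').le]
    nlinarith [mul_nonneg (sub_nonneg.2 hco) (sub_nonneg.2 huv)]
  have main : Br.mulVec u i * Br.mulVec v i' ≤
      (N ^ 2)⁻¹ * (Br.mulVec u i' * Br.mulVec v i)
        + (Mx * (Br.mulVec v i * Br.mulVec v i')
            - (N ^ 2)⁻¹ * (Mx * (Br.mulVec v i' * Br.mulVec v i))) := by
    rw [fb_expand Br u v i i', fb_expand Br u v i' i, fb_expand Br v v i i',
      fb_expand Br v v i' i]
    calc ∑ l, ∑ l', Br i l * Br i' l' * (u l * v l')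
        ≤ ∑ l, ∑ l', ((N ^ 2)⁻¹ * (Br i' l * Br i l' * (u l * v l'))
            + (Br i l * Br i' l' * (Mx * (v l * v l'))
              - (N ^ 2)⁻¹ * (Br i' l * Br i l' * (Mx * (v l * v l'))))) :=
          Finset.sum_le_sum fun l _ => Finset.sum_le_sum fun l' _ => key l l'
      _ = (N ^ 2)⁻¹ * ∑ l, ∑ l', Br i' l * Br i l' * (u l * v l')
            + (Mx * ∑ l, ∑ l', Br i l * Br i' l' * (v l * v l')
              - (N ^ 2)⁻¹ * (Mx * ∑ l, ∑ l', Br i' l * Br i l' * (v l * v l'))) := by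
          simp only [Finset.mul_sum, Finset.sum_add_distrib, Finset.sum_sub_distrib]
          congr 1
          congr 1 <;>
            exact Finset.sum_congr rfl fun l _ => Finset.sum_congr rfl fun l' _ => by ring
  -- now estimate the middle term
  have hBv : ∀ a b : Fin d, 0 ≤ Br.mulVec v a * Br.mulVec v b := fun a b =>
    mul_nonneg (fb_mulVec_nonneg (fun p q => le_trans zero_le_one (hB1 p q)) (fun l => (hv l).le) a)
      (fb_mulVec_nonneg (fun p q => le_trans zero_le_one (hB1 p q)) (fun l => (hv l).le) b)
  have hmid : Mx * (Br.mulVec v i * Br.mulVec v i')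
        - (N ^ 2)⁻¹ * (Mx * (Br.mulVec v i' * Br.mulVec v i))
      ≤ (1 - (N ^ 2)⁻¹) * c * (Br.mulVec u i' * Br.mulVec v i) := by
    have hm : mx * Br.mulVec v i' ≤ Br.mulVec u i' := by
      rw [fb_mulVec_apply, fb_mulVec_apply, Finset.mul_sum]
      refine Finset.sum_le_sum fun l _ => ?_
      have := h_m_le l
      have hb : (0:ℝ) ≤ Br i' l := le_trans zero_le_one (hB1 i' l)
      nlinarith
    have hθ : (0:ℝ) ≤ 1 - (N ^ 2)⁻¹ := by
      have : (N ^ 2)⁻¹ ≤ 1 := by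
        rw [inv_le_one_iff₀]; right; nlinarith
      linarith
    have hMv : Mx * (Br.mulVec v i * Br.mulVec v i') ≤ c * mx * (Br.mulVec v i * Br.mulVec v i') :=
      mul_le_mul_of_nonneg_right hMcm (hBv i i')
    have h2 : c * mx * (Br.mulVec v i * Br.mulVec v i') ≤ c * (Br.mulVec u i' * Br.mulVec v i) := by
      have hvi : 0 ≤ Br.mulVec v i :=
        fb_mulVec_nonneg (fun p q => le_trans zero_le_one (hB1 p q)) (fun l => (hv l).le) i
      have := mul_le_mul_of_nonneg_left hm (mul_nonneg (le_trans zero_le_one hc1) hvi)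
      calc c * mx * (Br.mulVec v i * Br.mulVec v i')
          = (c * Br.mulVec v i) * (mx * Br.mulVec v i') := by ring
        _ ≤ (c * Br.mulVec v i) * Br.mulVec u i' :=
            mul_le_mul_of_nonneg_left hm (mul_nonneg (le_trans zero_le_one hc1) hvi)
        _ = c * (Br.mulVec u i' * Br.mulVec v i) := by ring
    calc Mx * (Br.mulVec v i * Br.mulVec v i')
          - (N ^ 2)⁻¹ * (Mx * (Br.mulVec v i' * Br.mulVec v i))
        = (1 - (N ^ 2)⁻¹) * (Mx * (Br.mulVec v i * Br.mulVec v i')) := by ring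
      _ ≤ (1 - (N ^ 2)⁻¹) * (c * (Br.mulVec u i' * Br.mulVec v i)) := by
          refine mul_le_mul_of_nonneg_left (le_trans hMv h2) hθ
      _ = (1 - (N ^ 2)⁻¹) * c * (Br.mulVec u i' * Br.mulVec v i) := by ring
  calc Br.mulVec u i * Br.mulVec v i'
      ≤ (N ^ 2)⁻¹ * (Br.mulVec u i' * Br.mulVec v i)
          + (Mx * (Br.mulVec v i * Br.mulVec v i')
            - (N ^ 2)⁻¹ * (Mx * (Br.mulVec v i' * Br.mulVec v i))) := main
    _ ≤ (N ^ 2)⁻¹ * (Br.mulVec u i' * Br.mulVec v i)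
          + (1 - (N ^ 2)⁻¹) * c * (Br.mulVec u i' * Br.mulVec v i) := by linarith
    _ = (1 + (1 - (N ^ 2)⁻¹) * (c - 1)) * (Br.mulVec u i' * Br.mulVec v i) := by ring

end fbcontract
/-- alternating chains `B * Q₁ * B * Q₂ * ⋯ * B` built from a positive block `B`
and nonnegative matrices `Q` with no zero row. -/
inductive FBChain {d : ℕ} (Br : Matrix (Fin d) (Fin d) ℝ) : ℕ → Matrix (Fin d) (Fin d) ℝ → Prop
  | base : FBChain Br 0 Br
  | step {m : ℕ} (Q G : Matrix (Fin d) (Fin d) ℝ) (hQ0 : ∀ i l, 0 ≤ Q i l)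
      (hQrow : ∀ i, ∃ l, 0 < Q i l) (hG : FBChain Br m G) : FBChain Br (m + 1) (Br * Q * G)

section fbchain
variable {d : ℕ} {Br : Matrix (Fin d) (Fin d) ℝ} {N : ℝ}

lemma fb_chain_assoc (Q G : Matrix (Fin d) (Fin d) ℝ) (z : Fin d → ℝ) :
    (Br * Q * G).mulVec z = Br.mulVec (Q.mulVec (G.mulVec z)) := by
  rw [Matrix.mulVec_mulVec, Matrix.mulVec_mulVec]

lemma fb_chain_nonneg (hB1 : ∀ i j, (1:ℝ) ≤ Br i j) {m G} (hG : FBChain Br m G) :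
    ∀ i l, 0 ≤ G i l := by
  induction hG with
  | base => exact fun i l => le_trans zero_le_one (hB1 i l)
  | step Q G hQ0 hQrow hG ih =>
    intro i l
    rw [Matrix.mul_apply]
    refine Finset.sum_nonneg fun t _ => mul_nonneg ?_ (ih t l)
    rw [Matrix.mul_apply]
    exact Finset.sum_nonneg fun s _ => mul_nonneg (le_trans zero_le_one (hB1 i s)) (hQ0 s t)

lemma fb_chain_pos (hB1 : ∀ i j, (1:ℝ) ≤ Br i j) {m G} (hG : FBChain Br m G) :
    ∀ x : Fin d → ℝ, (∀ l, 0 ≤ x l) → x ≠ 0 → ∀ i, 0 < G.mulVec x i := by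
  induction hG with
  | base =>
    intro x hx hx0 i
    exact fb_mulVec_pos_mat (fun a b => lt_of_lt_of_le zero_lt_one (hB1 a b)) hx hx0 i
  | step Q G hQ0 hQrow hG ih =>
    intro x hx hx0 i
    rw [fb_chain_assoc]
    have h1 : ∀ l, 0 < G.mulVec x l := ih x hx hx0
    have h2 : ∀ l, 0 < Q.mulVec (G.mulVec x) l := fun l =>
      fb_mulVec_pos_row hQ0 hQrow h1 l
    refine fb_mulVec_pos_mat (fun a b => lt_of_lt_of_le zero_lt_one (hB1 a b))
      (fun l => (h2 l).le) (fun hc => (h2 i).ne' (congrFun hc i)) i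

lemma fb_chain_contract (hB1 : ∀ i j, (1:ℝ) ≤ Br i j) (hBN : ∀ i j, Br i j ≤ N)
    {m G} (hG : FBChain Br m G) :
    ∀ x y : Fin d → ℝ, (∀ l, 0 ≤ x l) → (∀ l, 0 ≤ y l) → ∀ i i',
      G.mulVec x i * G.mulVec y i' ≤
        (1 + (1 - (N ^ 2)⁻¹) ^ m * (N ^ 2 - 1)) * (G.mulVec x i' * G.mulVec y i) := by
  induction hG with
  | base =>
    intro x y hx hy i i'
    have : (1 + (1 - (N ^ 2)⁻¹) ^ 0 * (N ^ 2 - 1)) = N ^ 2 := by ring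
    rw [this]
    exact fb_base hB1 hBN hx hy i i'
  | @step m' Q G hQ0 hQrow hG ih =>
    intro x y hx hy i i'
    have hd : 0 < d := i.pos
    have hN1 : (1:ℝ) ≤ N := le_trans (hB1 i i) (hBN i i)
    have hN2 : (0:ℝ) < N ^ 2 := by nlinarith
    have hθ0 : (0:ℝ) ≤ 1 - (N ^ 2)⁻¹ := by
      have : (N ^ 2)⁻¹ ≤ 1 := by rw [inv_le_one_iff₀]; right; nlinarith
      linarith
    by_cases hx0 : x = 0
    · simp [hx0, fb_chain_assoc, Matrix.mulVec_zero]
    by_cases hy0 : y = 0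
    · simp [hy0, fb_chain_assoc, Matrix.mulVec_zero]
    simp only [fb_chain_assoc]
    set u := Q.mulVec (G.mulVec x) with hu_def
    set v := Q.mulVec (G.mulVec y) with hv_def
    have hGx : ∀ l, 0 < G.mulVec x l := fb_chain_pos hB1 hG x hx hx0
    have hGy : ∀ l, 0 < G.mulVec y l := fb_chain_pos hB1 hG y hy hy0
    have hu : ∀ l, 0 < u l := fun l => fb_mulVec_pos_row hQ0 hQrow hGx l
    have hv : ∀ l, 0 < v l := fun l => fb_mulVec_pos_row hQ0 hQrow hGy l
    set cm := 1 + (1 - (N ^ 2)⁻¹) ^ m' * (N ^ 2 - 1) with hcm_def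
    have hc1 : 1 ≤ cm := by
      have : (0:ℝ) ≤ (1 - (N ^ 2)⁻¹) ^ m' := pow_nonneg hθ0 m'
      have hN21 : (1:ℝ) ≤ N ^ 2 := by nlinarith
      rw [hcm_def]
      nlinarith
    have hcross : ∀ l l', u l * v l' ≤ cm * (u l' * v l) := fun l l' =>
      fb_cross_mulVec hQ0 (fun a b => ih x y hx hy a b) l l'
    have hfinal := fb_contract hd hB1 hBN hu hv hc1 hcross i i'
    have heq : (1 + (1 - (N ^ 2)⁻¹) * (cm - 1))
        = 1 + (1 - (N ^ 2)⁻¹) ^ (m' + 1) * (N ^ 2 - 1) := by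
      rw [hcm_def, pow_succ]; ring
    rwa [heq] at hfinal

end fbchain
section fbprod
variable {d : ℕ}

/-- product of the matrices `M a, M (a+1), …, M (b-1)` (natural number entries). -/
def fbP (M : ℕ → Matrix (Fin d) (Fin d) ℕ) (a b : ℕ) : Matrix (Fin d) (Fin d) ℕ :=
  ((List.range' a (b - a)).map M).prod

/-- the same product with entries cast to the reals. -/
def fbR (M : ℕ → Matrix (Fin d) (Fin d) ℕ) (a b : ℕ) : Matrix (Fin d) (Fin d) ℝ :=
  (fbP M a b).map (Nat.cast : ℕ → ℝ)

lemma fbP_split (M : ℕ → Matrix (Fin d) (Fin d) ℕ) {a b c : ℕ} (hab : a ≤ b) (hbc : b ≤ c) :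
    fbP M a c = fbP M a b * fbP M b c := by
  unfold fbP
  rw [← List.prod_append, ← List.map_append]
  congr 2
  have h1 : a + (b - a) = b := by omega
  have h2 : (b - a) + (c - b) = c - a := by omega
  have h3 : List.range' a (b - a) ++ List.range' (a + (b - a)) (c - b) = List.range' a ((c - b) + (b - a)) := by
    rw [Nat.add_comm (c - b) (b - a)]; exact List.range'_append_1
  rw [h1, Nat.add_comm (c - b) (b - a), h2] at h3
  exact h3.symm

lemma fbR_split (M : ℕ → Matrix (Fin d) (Fin d) ℕ) {a b c : ℕ} (hab : a ≤ b) (hbc : b ≤ c) :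
    fbR M a c = fbR M a b * fbR M b c := by
  unfold fbR
  rw [fbP_split M hab hbc]
  exact Matrix.map_mul (f := Nat.castRingHom ℝ)

lemma fbR_nonneg (M : ℕ → Matrix (Fin d) (Fin d) ℕ) (a b : ℕ) (i l : Fin d) :
    (0:ℝ) ≤ fbR M a b i l := by
  simp [fbR, Matrix.map_apply]

lemma fb_row_pos_list (L : List (Matrix (Fin d) (Fin d) ℕ))
    (h : ∀ A ∈ L, ∀ i, ∃ l, 0 < A i l) : ∀ i, ∃ l, 0 < L.prod i l := by
  induction L with
  | nil => intro i; exact ⟨i, by simp [Matrix.one_apply]⟩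
  | cons A L ih =>
    intro i
    obtain ⟨l, hl⟩ := h A List.mem_cons_self i
    obtain ⟨l', hl'⟩ := ih (fun A' hA' => h A' (List.mem_cons_of_mem _ hA')) l
    refine ⟨l', ?_⟩
    rw [List.prod_cons, Matrix.mul_apply]
    exact lt_of_lt_of_le (Nat.mul_pos hl hl')
      (Finset.single_le_sum (f := fun t => A i t * L.prod t l')
        (fun t _ => Nat.zero_le _) (Finset.mem_univ l))

lemma fbP_row (M : ℕ → Matrix (Fin d) (Fin d) ℕ) (hrow : ∀ n i, ∃ l, 0 < M n i l) (a b : ℕ) :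
    ∀ i, ∃ l, 0 < fbP M a b i l := by
  refine fb_row_pos_list _ fun A hA => ?_
  obtain ⟨n, -, rfl⟩ := List.mem_map.1 hA
  exact hrow n

lemma fbR_row (M : ℕ → Matrix (Fin d) (Fin d) ℕ) (hrow : ∀ n i, ∃ l, 0 < M n i l) (a b : ℕ) :
    ∀ i, ∃ l, (0:ℝ) < fbR M a b i l := by
  intro i
  obtain ⟨l, hl⟩ := fbP_row M hrow a b i
  exact ⟨l, by simp [fbR, Matrix.map_apply]; exact_mod_cast hl⟩

/-- the block products occurring in the hypothesis assemble into chains. -/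
lemma fb_chain_inst (M : ℕ → Matrix (Fin d) (Fin d) ℕ) (hrow : ∀ n i, ∃ l, 0 < M n i l)
    (B : Matrix (Fin d) (Fin d) ℕ) :
    ∀ (m : ℕ) (j k : ℕ → ℕ), (∀ a, j a < k a) → (∀ a, k a ≤ j (a + 1)) →
      (∀ a, fbP M (j a) (k a) = B) →
      FBChain (B.map (Nat.cast : ℕ → ℝ)) m (fbR M (j 0) (k m)) := by
  intro m
  induction m with
  | zero =>
    intro j k hjk hkj hp
    have h0 : fbR M (j 0) (k 0) = B.map (Nat.cast : ℕ → ℝ) := by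
      unfold fbR; rw [hp 0]
    rw [h0]; exact FBChain.base
  | succ m ih =>
    intro j k hjk hkj hp
    have hmono : ∀ a b, a ≤ b → k a ≤ k b := fun a b hab =>
      monotone_nat_of_le_succ (fun n => le_trans (hkj n) (le_of_lt (hjk (n+1)))) hab
    have h01 : j 0 ≤ k 0 := le_of_lt (hjk 0)
    have h12 : k 0 ≤ j 1 := hkj 0
    have h23 : j 1 ≤ k (m + 1) := le_trans (le_of_lt (hjk 1)) (hmono 1 (m+1) (by omega))
    have hsplit : fbR M (j 0) (k (m + 1)) =
        B.map (Nat.cast : ℕ → ℝ) * fbR M (k 0) (j 1) * fbR M (j 1) (k (m + 1)) := by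
      rw [fbR_split M h01 (le_trans h12 h23), fbR_split M h12 h23, ← Matrix.mul_assoc]
      congr 1
      congr 1
      unfold fbR; rw [hp 0]
    rw [hsplit]
    refine FBChain.step _ _ (fun i l => fbR_nonneg M _ _ i l) (fbR_row M hrow _ _) ?_
    have := ih (fun a => j (a + 1)) (fun a => k (a + 1)) (fun a => hjk (a + 1))
      (fun a => hkj (a + 1)) (fun a => hp (a + 1))
    exact this

end fbprod
section fbcompact
variable {d : ℕ}

lemma fb_mulVec_continuous (A : Matrix (Fin d) (Fin d) ℝ) :
    Continuous fun v : Fin d → ℝ => A.mulVec v := by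
  refine continuous_pi fun i => ?_
  have : (fun v : Fin d → ℝ => A.mulVec v i) = fun v => ∑ l, A i l * v l := by
    funext v; rw [fb_mulVec_apply]
  rw [this]
  exact continuous_finset_sum _ fun l _ => continuous_const.mul (continuous_apply l)

/-- a limit of points of the cone `A ℝ₊ᵈ` whose images stay in the unit cube
is itself in the cone. -/
lemma fb_exists_preimage (A : Matrix (Fin d) (Fin d) ℝ) (hA : ∀ i l, 0 ≤ A i l)
    (z : ℕ → Fin d → ℝ) (x : ℕ → Fin d → ℝ) (hx0 : ∀ m l, 0 ≤ x m l)
    (hxz : ∀ m, A.mulVec (x m) = z m) (hz1 : ∀ m i, z m i ≤ 1)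
    (f : Fin d → ℝ) (hf : Filter.Tendsto z Filter.atTop (nhds f)) :
    ∃ w : Fin d → ℝ, (∀ l, 0 ≤ w l) ∧ A.mulVec w = f := by
  classical
  set x' : ℕ → Fin d → ℝ := fun m l => if ∃ i, 0 < A i l then x m l else 0 with hx'
  have hAx' : ∀ m, A.mulVec (x' m) = z m := by
    intro m
    rw [← hxz m]
    ext i
    rw [fb_mulVec_apply, fb_mulVec_apply]
    refine Finset.sum_congr rfl fun l _ => ?_
    by_cases h : ∃ i, 0 < A i l
    · simp [hx', h]
    · push_neg at h
      have : A i l = 0 := le_antisymm (h i) (hA i l)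
      simp [hx', h, this]
  set R : Fin d → ℝ := fun l => if h : ∃ i, 0 < A i l then 1 / A h.choose l else 0 with hR
  have hbound : ∀ m, x' m ∈ Set.Icc (0 : Fin d → ℝ) R := by
    intro m
    constructor
    · intro l
      by_cases h : ∃ i, 0 < A i l
      · simpa [hx', h] using hx0 m l
      · simp [hx', h]
    · intro l
      by_cases h : ∃ i, 0 < A i l
      · have hi : 0 < A h.choose l := h.choose_spec
        have hle : A h.choose l * x m l ≤ 1 := by
          have h1 : A h.choose l * x m l ≤ A.mulVec (x m) h.choose := by
            rw [fb_mulVec_apply]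
            exact Finset.single_le_sum
              (f := fun t => A h.choose t * x m t)
              (fun t _ => mul_nonneg (hA _ t) (hx0 m t)) (Finset.mem_univ l)
          calc A h.choose l * x m l ≤ A.mulVec (x m) h.choose := h1
            _ = z m h.choose := by rw [hxz m]
            _ ≤ 1 := hz1 m h.choose
        have : x m l ≤ 1 / A h.choose l := by
          rw [le_div_iff₀ hi]; linarith [mul_comm (A h.choose l) (x m l)]
        simpa [hx', hR, h] using this
      · simp [hx', hR, h]
  obtain ⟨w, hwmem, φ, hφ, hφt⟩ := isCompact_Icc.tendsto_subseq hbound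
  refine ⟨w, fun l => hwmem.1 l, ?_⟩
  have h1 : Filter.Tendsto (fun m => A.mulVec (x' (φ m))) Filter.atTop (nhds (A.mulVec w)) :=
    ((fb_mulVec_continuous A).tendsto w).comp hφt
  have h2 : Filter.Tendsto (fun m => A.mulVec (x' (φ m))) Filter.atTop (nhds f) := by
    simp only [hAx']
    exact hf.comp hφ.tendsto_atTop
  exact tendsto_nhds_unique h1 h2

end fbcompact
/-- Furstenberg's theorem: if a sequence of non-negative integer matrices (with no zero
row) contains infinitely many disjoint occurrences of a fixed positive block `B`, then the
nested cones `M_0 M_1 ⋯ M_{n-1} ℝ_+^d` intersect in a single half-line `ℝ_+ f` directed by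
a positive vector `f`. -/
theorem furstenberg_cone_contraction (d : ℕ)
    (M : ℕ → Matrix (Fin d) (Fin d) ℕ)
    (hrow : ∀ n i, ∃ l, 0 < M n i l)
    (B : Matrix (Fin d) (Fin d) ℕ) (hB : ∀ i j, 0 < B i j)
    (j k : ℕ → ℕ)
    (hjk : ∀ m, j m < k m) (hkj : ∀ m, k m ≤ j (m + 1))
    (hprod : ∀ m, ((List.range' (j m) (k m - j m)).map M).prod = B) :
    ∃ f : Fin d → ℝ, (∀ i, 0 < f i) ∧
      (⋂ n : ℕ,
        (fun x => ((((List.range n).map M).prod).map (Nat.cast : ℕ → ℝ)).mulVec x) ''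
          {x : Fin d → ℝ | ∀ i, 0 ≤ x i}) =
      {x : Fin d → ℝ | ∃ t : ℝ, 0 ≤ t ∧ x = t • f} := by
  classical
  rcases Nat.eq_zero_or_pos d with hd0 | hd
  · -- degenerate case `d = 0`
    subst hd0
    refine ⟨fun i => 1, fun i => i.elim0, ?_⟩
    ext x
    simp only [Set.mem_iInter, Set.mem_image, Set.mem_setOf_eq]
    constructor
    · intro _; exact ⟨0, le_rfl, Subsingleton.elim _ _⟩
    · intro _ n; exact ⟨0, fun i => i.elim0, Subsingleton.elim _ _⟩
  -- main case
  have hPn : ∀ n, (((List.range n).map M).prod).map (Nat.cast : ℕ → ℝ) = fbR M 0 n := by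
    intro n
    unfold fbR fbP
    rw [List.range_eq_range', Nat.sub_zero]
  simp only [hPn]
  set C : ℕ → Set (Fin d → ℝ) :=
    fun n => (fun x => (fbR M 0 n).mulVec x) '' {x : Fin d → ℝ | ∀ i, 0 ≤ x i} with hC
  -- basic constants
  set Br : Matrix (Fin d) (Fin d) ℝ := B.map (Nat.cast : ℕ → ℝ) with hBr
  set N : ℝ := ((∑ i, ∑ l, B i l : ℕ) : ℝ) with hN
  have hB1 : ∀ i l, (1:ℝ) ≤ Br i l := by
    intro i l
    rw [hBr, Matrix.map_apply]
    exact_mod_cast hB i l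
  have hBN : ∀ i l, Br i l ≤ N := by
    intro i l
    rw [hBr, Matrix.map_apply, hN]
    have h1 : B i l ≤ ∑ l', B i l' :=
      Finset.single_le_sum (fun t _ => Nat.zero_le _) (Finset.mem_univ l)
    have h2 : (∑ l', B i l') ≤ ∑ i', ∑ l', B i' l' :=
      Finset.single_le_sum (f := fun i' => ∑ l', B i' l') (fun t _ => Nat.zero_le _)
        (Finset.mem_univ i)
    exact_mod_cast le_trans h1 h2
  have i0 : Fin d := ⟨0, hd⟩
  have hN1 : (1:ℝ) ≤ N := le_trans (hB1 i0 i0) (hBN i0 i0)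
  have hN2 : (0:ℝ) < N ^ 2 := by nlinarith
  have hθ0 : (0:ℝ) ≤ 1 - (N ^ 2)⁻¹ := by
    have : (N ^ 2)⁻¹ ≤ 1 := by rw [inv_le_one_iff₀]; right; nlinarith
    linarith
  have hθ1 : 1 - (N ^ 2)⁻¹ < 1 := by
    have : 0 < (N ^ 2)⁻¹ := inv_pos.2 hN2
    linarith
  have hN21 : (1:ℝ) ≤ N ^ 2 := by nlinarith
  -- monotonicity facts
  have hkmono : ∀ a b, a ≤ b → k a ≤ k b := fun a b hab =>
    monotone_nat_of_le_succ (fun n => le_trans (hkj n) (le_of_lt (hjk (n + 1)))) hab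
  have hmk : ∀ m, m ≤ k m := by
    intro m
    induction m with
    | zero => exact Nat.zero_le _
    | succ m ih => have h1 := hjk (m + 1); have h2 := hkj m; omega
  -- cross-ratio bound for points of the cone `C (k m)`
  have hchi : ∀ (m : ℕ) (u v : Fin d → ℝ), u ∈ C (k m) → v ∈ C (k m) → ∀ i i',
      u i * v i' ≤ (1 + (1 - (N ^ 2)⁻¹) ^ m * (N ^ 2 - 1)) * (u i' * v i) := by
    intro m u v hu hv i i'
    obtain ⟨xu, hxu, hxueq'⟩ := hu
    obtain ⟨xv, hxv, hxveq'⟩ := hv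
    have hxueq : (fbR M 0 (k m)).mulVec xu = u := hxueq'
    have hxveq : (fbR M 0 (k m)).mulVec xv = v := hxveq'
    have hp : ∀ a, fbP M (j a) (k a) = B := fun a => hprod a
    have hchain := fb_chain_inst M hrow B m j k hjk hkj hp
    have hj0km : j 0 ≤ k m := le_trans (le_of_lt (hjk 0)) (hkmono 0 m (Nat.zero_le m))
    have hsplit : fbR M 0 (k m) = fbR M 0 (j 0) * fbR M (j 0) (k m) :=
      fbR_split M (Nat.zero_le _) hj0km
    have hueq : u = (fbR M 0 (j 0)).mulVec ((fbR M (j 0) (k m)).mulVec xu) := by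
      rw [Matrix.mulVec_mulVec, ← hsplit, hxueq]
    have hveq : v = (fbR M 0 (j 0)).mulVec ((fbR M (j 0) (k m)).mulVec xv) := by
      rw [Matrix.mulVec_mulVec, ← hsplit, hxveq]
    rw [hueq, hveq]
    exact fb_cross_mulVec (fbR_nonneg M 0 (j 0))
      (fun a b => fb_chain_contract hB1 hBN hchain xu xv hxu hxv a b) i i'
  -- positivity of nonzero points of `C (k 0)`
  have hpos_of_mem : ∀ g, g ∈ C (k 0) → g ≠ 0 → ∀ i, 0 < g i := by
    intro g hg hgne i
    obtain ⟨x, hx, hxeq'⟩ := hg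
    have hxeq : (fbR M 0 (k 0)).mulVec x = g := hxeq'
    have hsplit : fbR M 0 (k 0) = fbR M 0 (j 0) * Br := by
      rw [fbR_split M (Nat.zero_le _) (le_of_lt (hjk 0))]
      congr 1
      show fbR M (j 0) (k 0) = Br
      unfold fbR fbP
      rw [hprod 0, hBr]
    have hgeq : g = (fbR M 0 (j 0)).mulVec (Br.mulVec x) := by
      rw [Matrix.mulVec_mulVec, ← hsplit, hxeq]
    have hx0 : x ≠ 0 := by
      intro h
      exact hgne (by rw [← hxeq, h, Matrix.mulVec_zero])
    have hBx : ∀ l, 0 < Br.mulVec x l :=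
      fb_mulVec_pos_mat (fun a b => lt_of_lt_of_le zero_lt_one (hB1 a b)) hx hx0
    rw [hgeq]
    exact fb_mulVec_pos_row (fbR_nonneg M 0 (j 0)) (fbR_row M hrow 0 (j 0)) hBx i
  -- the normalized sequence
  set w : ℕ → Fin d → ℝ := fun m => (fbR M 0 (k m)).mulVec (fun _ => 1) with hw
  have hw_pos : ∀ m i, 0 < w m i := fun m i =>
    fb_mulVec_pos_row (fbR_nonneg M 0 (k m)) (fbR_row M hrow 0 (k m)) (fun _ => one_pos) i
  set t : ℕ → ℝ := fun m => ∑ i, w m i with ht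
  have ht_pos : ∀ m, 0 < t m := fun m =>
    Finset.sum_pos (fun i _ => hw_pos m i) ⟨i0, Finset.mem_univ i0⟩
  set y : ℕ → Fin d → ℝ := fun m => (t m)⁻¹ • w m with hy
  have hy_nonneg : ∀ m i, 0 ≤ y m i := fun m i =>
    mul_nonneg (inv_nonneg.2 (ht_pos m).le) (hw_pos m i).le
  have hy_sum : ∀ m, ∑ i, y m i = 1 := by
    intro m
    have : ∑ i, y m i = (t m)⁻¹ * ∑ i, w m i := by
      rw [Finset.mul_sum]; rfl
    rw [this]
    exact inv_mul_cancel₀ (ht_pos m).ne'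
  have hy_le1 : ∀ m i, y m i ≤ 1 := by
    intro m i
    rw [← hy_sum m]
    exact Finset.single_le_sum (fun i' _ => hy_nonneg m i') (Finset.mem_univ i)
  have hy_mem : ∀ n m, n ≤ k m → y m ∈ C n := by
    intro n m hn
    refine ⟨(t m)⁻¹ • (fbR M n (k m)).mulVec (fun _ => 1), ?_, ?_⟩
    · intro i
      exact mul_nonneg (inv_nonneg.2 (ht_pos m).le)
        (fb_mulVec_nonneg (fbR_nonneg M n (k m)) (fun _ => zero_le_one) i)
    · show (fbR M 0 n).mulVec _ = y m
      rw [Matrix.mulVec_smul, Matrix.mulVec_mulVec, ← fbR_split M (Nat.zero_le n) hn]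
  -- domination between normalized points with small cross-ratio
  have hdom : ∀ (u v : Fin d → ℝ) (c : ℝ), (∑ i, u i) = 1 → (∑ i, v i) = 1 →
      (∀ i i', u i * v i' ≤ c * (u i' * v i)) → ∀ i, u i ≤ c * v i := by
    intro u v c hu hv h i
    have h1 : ∑ i', u i * v i' ≤ ∑ i', c * (u i' * v i) :=
      Finset.sum_le_sum fun i' _ => h i i'
    rw [← Finset.mul_sum, hv, mul_one] at h1
    refine h1.trans (le_of_eq ?_)
    calc ∑ i', c * (u i' * v i) = ∑ i', (c * v i) * u i' :=
          Finset.sum_congr rfl fun i' _ => by ring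
      _ = (c * v i) * ∑ i', u i' := by rw [Finset.mul_sum]
      _ = c * v i := by rw [hu, mul_one]
  have hcomp : ∀ a b, a ≤ b → ∀ i,
      y b i ≤ (1 + (1 - (N ^ 2)⁻¹) ^ a * (N ^ 2 - 1)) * y a i ∧
      y a i ≤ (1 + (1 - (N ^ 2)⁻¹) ^ a * (N ^ 2 - 1)) * y b i := by
    intro a b hab i
    have hbm : y b ∈ C (k a) := hy_mem (k a) b (hkmono a b hab)
    have ham : y a ∈ C (k a) := hy_mem (k a) a le_rfl
    exact ⟨hdom (y b) (y a) _ (hy_sum b) (hy_sum a) (hchi a (y b) (y a) hbm ham) i,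
      hdom (y a) (y b) _ (hy_sum a) (hy_sum b) (hchi a (y a) (y b) ham hbm) i⟩
  -- Cauchy sequence
  have hcm1 : ∀ (a : ℕ), (0:ℝ) ≤ (1 - (N ^ 2)⁻¹) ^ a * (N ^ 2 - 1) :=
    fun a => mul_nonneg (pow_nonneg hθ0 a) (by linarith)
  have hdist : ∀ a, dist (y a) (y (a + 1)) ≤ (N ^ 2 - 1) * (1 - (N ^ 2)⁻¹) ^ a := by
    intro a
    have hr0 : (0:ℝ) ≤ (N ^ 2 - 1) * (1 - (N ^ 2)⁻¹) ^ a := by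
      have := hcm1 a; linarith [mul_comm ((1 - (N ^ 2)⁻¹) ^ a) (N ^ 2 - 1)]
    rw [dist_pi_le_iff hr0]
    intro i
    obtain ⟨e1, e2⟩ := hcomp a (a + 1) (Nat.le_succ a) i
    rw [Real.dist_eq, abs_sub_le_iff]
    have l1 := hy_le1 a i
    have l2 := hy_le1 (a + 1) i
    have n1 := hy_nonneg a i
    have n2 := hy_nonneg (a + 1) i
    have hcc := hcm1 a
    constructor <;> nlinarith
  have hcauchy : CauchySeq y :=
    cauchySeq_of_le_geometric (1 - (N ^ 2)⁻¹) (N ^ 2 - 1) hθ1 hdist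
  obtain ⟨f, hft⟩ := cauchySeq_tendsto_of_complete hcauchy
  -- properties of `f`
  have hf_mem : ∀ n, f ∈ C n := by
    intro n
    have hs : Filter.Tendsto (fun m => y (m + n)) Filter.atTop (nhds f) :=
      hft.comp (Filter.tendsto_add_atTop_nat n)
    have hmem : ∀ m : ℕ, y (m + n) ∈ C n :=
      fun m => hy_mem n (m + n) (le_trans (Nat.le_add_left n m) (hmk (m + n)))
    choose x hx1 hx2 using hmem
    obtain ⟨w', hw1, hw2⟩ := fb_exists_preimage (fbR M 0 n) (fbR_nonneg M 0 n)
      (fun m => y (m + n)) x (fun m l => hx1 m l) hx2 (fun m i => hy_le1 (m + n) i) f hs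
    exact ⟨w', hw1, hw2⟩
  have hf_sum : ∑ i, f i = 1 := by
    have h1 : Filter.Tendsto (fun m => ∑ i, y m i) Filter.atTop (nhds (∑ i, f i)) :=
      tendsto_finset_sum _ fun i _ => ((continuous_apply i).tendsto f).comp hft
    have h2 : (fun m => ∑ i, y m i) = fun _ => (1 : ℝ) := funext hy_sum
    rw [h2] at h1
    exact (tendsto_nhds_unique h1 tendsto_const_nhds)
  have hf_ne : f ≠ 0 := by
    intro h
    rw [h] at hf_sum
    simp at hf_sum
  have hf_pos : ∀ i, 0 < f i := hpos_of_mem f (hf_mem (k 0)) hf_ne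
  -- conclusion
  refine ⟨f, hf_pos, ?_⟩
  ext g
  simp only [Set.mem_iInter, Set.mem_setOf_eq]
  constructor
  · intro hg
    by_cases hg0 : g = 0
    · exact ⟨0, le_rfl, by rw [hg0, zero_smul]⟩
    have hg_pos : ∀ i, 0 < g i := hpos_of_mem g (hg (k 0)) hg0
    -- the cross-ratio of `f` and `g` is `1`
    have hle : ∀ i i', f i * g i' ≤ f i' * g i := by
      intro i i'
      by_contra hlt
      push_neg at hlt
      set a := f i * g i' with ha
      set b := f i' * g i with hb
      have hball : ∀ m : ℕ, a ≤ (1 + (1 - (N ^ 2)⁻¹) ^ m * (N ^ 2 - 1)) * b :=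
        fun m => hchi m f g (hf_mem (k m)) (hg (k m)) i i'
      have hlim : Filter.Tendsto
          (fun m => (1 + (1 - (N ^ 2)⁻¹) ^ m * (N ^ 2 - 1)) * b) Filter.atTop (nhds b) := by
        have h0 : Filter.Tendsto (fun m : ℕ => (1 - (N ^ 2)⁻¹) ^ m) Filter.atTop (nhds 0) :=
          tendsto_pow_atTop_nhds_zero_of_lt_one hθ0 hθ1
        have h1 := ((h0.mul_const (N ^ 2 - 1)).const_add 1).mul_const b
        simpa using h1
      have hev := hlim.eventually_lt_const hlt
      obtain ⟨m, hm⟩ := hev.exists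
      exact absurd (hball m) (not_le.2 hm)
    have heq : ∀ i i', f i * g i' = f i' * g i :=
      fun i i' => le_antisymm (hle i i') (hle i' i)
    refine ⟨g i0 / f i0, div_nonneg (hg_pos i0).le (hf_pos i0).le, ?_⟩
    funext i
    have h := heq i0 i
    have hfi0 : f i0 ≠ 0 := (hf_pos i0).ne'
    show g i = (g i0 / f i0) * f i
    field_simp
    linarith [h]
  · rintro ⟨s, hs, rfl⟩
    intro n
    obtain ⟨x, hx, hxeq⟩ := hf_mem n
    have hxeq : (fbR M 0 n).mulVec x = f := hxeq
    exact ⟨s • x, fun i => mul_nonneg hs (hx i),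
      show (fbR M 0 n).mulVec (s • x) = s • f by rw [Matrix.mulVec_smul, hxeq]⟩
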